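/- Let K → Γ̂ → Γ be a group extension (K a normal subgroup of Γ̂ with quotient Γ), where Γ̂ is normally generated by a finite set and the subgroup K is a bounded subset of Γ̂ with respect to the bi-invariant word norm. Then Γ̂ is bounded with respect to its bi-invariant word norm if and only if Γ is bounded with respect to its bi-invariant word norm. In particular, an extension of a bounded normally finitely generated group by a finite group is bounded. -/

import Mathlib

/-- The set of all conjugates of elements of `S`. -/
def conjSet {G : Type*} [Group G] (S : Set G) : Set G :=
  {x | ∃ g : G, ∃ s ∈ S, x = g * s * g⁻¹}

/-- The word norm of `g` with respect to a generating set `T`: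
the least length of a word in elements of `T` expressing `g`. -/
noncomputable def wordNorm {G : Type*} [Group G] (T : Set G) (g : G) : ℕ :=
  sInf {k | ∃ l : List G, (∀ x ∈ l, x ∈ T) ∧ l.prod = g ∧ l.length = k}

lemma conjSet_inv_mem {G : Type*} [Group G] {S : Set G} (hinv : ∀ s ∈ S, s⁻¹ ∈ S)
    {x : G} (hx : x ∈ conjSet S) : x⁻¹ ∈ conjSet S := by
  obtain ⟨g, s, hs, rfl⟩ := hx
  exact ⟨g, s⁻¹, hinv s hs, by group⟩

/-- From a normally generating symmetric set, every element has a word. -/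
lemma exists_word {G : Type*} [Group G] {T : Set G} (hTinv : ∀ x ∈ T, x⁻¹ ∈ T)
    (hgen : Subgroup.closure T = ⊤) (g : G) :
    ∃ l : List G, (∀ x ∈ l, x ∈ T) ∧ l.prod = g := by
  have hg : g ∈ (Subgroup.closure T).toSubmonoid := by rw [hgen]; trivial
  rw [Subgroup.closure_toSubmonoid] at hg
  obtain ⟨l, hl, hp⟩ := Submonoid.exists_list_of_mem_closure hg
  refine ⟨l, fun x hx => ?_, hp⟩
  rcases hl x hx with h | h
  · exact h
  · simpa using hTinv x⁻¹ h

lemma wordNorm_le_of_word {G : Type*} [Group G] {T : Set G} {g : G} {l : List G}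
    (hl : ∀ x ∈ l, x ∈ T) (hp : l.prod = g) : wordNorm T g ≤ l.length :=
  Nat.sInf_le ⟨l, hl, hp, rfl⟩

lemma exists_word_of_wordNorm {G : Type*} [Group G] {T : Set G} {g : G}
    (h : ∃ l : List G, (∀ x ∈ l, x ∈ T) ∧ l.prod = g) :
    ∃ l : List G, (∀ x ∈ l, x ∈ T) ∧ l.prod = g ∧ l.length = wordNorm T g := by
  obtain ⟨l, hl, hp⟩ := h
  have hne : {k | ∃ l : List G, (∀ x ∈ l, x ∈ T) ∧ l.prod = g ∧ l.length = k}.Nonempty :=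
    ⟨l.length, l, hl, hp, rfl⟩
  exact Nat.sInf_mem hne

theorem extension_bounded_iff_quotient_bounded {G : Type*} [Group G]
    (K : Subgroup G) [K.Normal]
    (S : Set G) (hfin : S.Finite) (hinv : S⁻¹ = S)
    (hgen : Subgroup.closure (conjSet S) = ⊤)
    (hK : ∃ κ : ℕ, ∀ k ∈ K, wordNorm (conjSet S) k ≤ κ) :
    (∃ C : ℕ, ∀ g : G, wordNorm (conjSet S) g ≤ C) ↔
    (∃ C : ℕ, ∀ x : G ⧸ K,
      wordNorm (conjSet ((QuotientGroup.mk : G → G ⧸ K) '' S)) x ≤ C) := by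
  set π : G →* G ⧸ K := QuotientGroup.mk' K
  have hSinv : ∀ s ∈ S, s⁻¹ ∈ S := fun s hs => by
    rw [← hinv]; exact Set.inv_mem_inv.mpr hs
  have hTinv : ∀ x ∈ conjSet S, x⁻¹ ∈ conjSet S := fun x hx => conjSet_inv_mem hSinv hx
  -- π maps conjSet S into conjSet (π '' S)
  have hmap : ∀ x ∈ conjSet S, π x ∈ conjSet ((QuotientGroup.mk : G → G ⧸ K) '' S) := by
    rintro x ⟨g, s, hs, rfl⟩
    exact ⟨π g, π s, ⟨s, hs, rfl⟩, by simp⟩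
  constructor
  · rintro ⟨C, hC⟩
    refine ⟨C, fun x => ?_⟩
    obtain ⟨g, rfl⟩ := QuotientGroup.mk_surjective x
    obtain ⟨l, hl, hp, hlen⟩ := exists_word_of_wordNorm (exists_word hTinv hgen g)
    have : wordNorm (conjSet ((QuotientGroup.mk : G → G ⧸ K) '' S))
        ((QuotientGroup.mk : G → G ⧸ K) g) ≤ (l.map π).length := by
      refine wordNorm_le_of_word ?_ ?_
      · intro y hy
        obtain ⟨x, hx, rfl⟩ := List.mem_map.mp hy
        exact hmap x (hl x hx)
      · rw [← hp]; exact (map_list_prod π l).symm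
    simpa [hlen] using this.trans (by simpa [hlen] using hC g)
  · rintro ⟨C, hC⟩
    obtain ⟨κ, hκ⟩ := hK
    refine ⟨C + κ, fun g => ?_⟩
    -- lift a minimal word for π g
    have hSinv' : ∀ s ∈ (QuotientGroup.mk : G → G ⧸ K) '' S, s⁻¹ ∈
        (QuotientGroup.mk : G → G ⧸ K) '' S := by
      rintro y ⟨s, hs, rfl⟩
      exact ⟨s⁻¹, hSinv s hs, by simp⟩
    have hTinv' := fun x hx => conjSet_inv_mem hSinv' (x := x) hx
    have hgen' : Subgroup.closure (conjSet ((QuotientGroup.mk : G → G ⧸ K) '' S)) = ⊤ := by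
      rw [eq_top_iff]
      have h1 : Subgroup.closure (π '' conjSet S) ≤
          Subgroup.closure (conjSet ((QuotientGroup.mk : G → G ⧸ K) '' S)) :=
        Subgroup.closure_mono (by rintro y ⟨x, hx, rfl⟩; exact hmap x hx)
      have h2 : (Subgroup.closure (conjSet S)).map π = Subgroup.closure (π '' conjSet S) :=
        MonoidHom.map_closure π _
      rw [hgen, Subgroup.map_top_of_surjective π (QuotientGroup.mk'_surjective K)] at h2
      rw [← h2] at h1
      exact h1
    obtain ⟨lq, hlq, hpq, hlenq⟩ :=
      exists_word_of_wordNorm (exists_word hTinv' hgen' (π g))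
    -- lift the word
    have hlift : ∀ lq : List (G ⧸ K), (∀ y ∈ lq, y ∈ conjSet ((QuotientGroup.mk : G → G ⧸ K) '' S)) →
        ∃ l : List G, (∀ x ∈ l, x ∈ conjSet S) ∧ l.length = lq.length ∧ π l.prod = lq.prod := by
      intro lq
      induction lq with
      | nil => intro _; exact ⟨[], by simp, by simp, by simp⟩
      | cons y t ih =>
        intro h
        obtain ⟨l, hl, hlen, hp⟩ := ih (fun z hz => h z (List.mem_cons_of_mem _ hz))
        obtain ⟨a, s, hs, hy⟩ := h y List.mem_cons_self
        obtain ⟨b, rfl⟩ := QuotientGroup.mk_surjective a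
        obtain ⟨u, hu, rfl⟩ := hs
        refine ⟨(b * u * b⁻¹) :: l, ?_, by simp [hlen], ?_⟩
        · intro x hx
          rcases List.mem_cons.mp hx with rfl | hx
          · exact ⟨b, u, hu, rfl⟩
          · exact hl x hx
        · simp [hy, hp]; rfl
    obtain ⟨l, hl, hlen, hp⟩ := hlift lq hlq
    -- k := l.prod⁻¹ * g ∈ K
    have hk : l.prod⁻¹ * g ∈ K := by
      rw [← QuotientGroup.eq]
      show π l.prod = π g
      rw [hp, hpq]
    obtain ⟨lk, hlk, hpk, hlenk⟩ :=
      exists_word_of_wordNorm (exists_word hTinv hgen (l.prod⁻¹ * g))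
    have hword : wordNorm (conjSet S) g ≤ (l ++ lk).length := by
      refine wordNorm_le_of_word ?_ ?_
      · intro x hx
        rcases List.mem_append.mp hx with hx | hx
        · exact hl x hx
        · exact hlk x hx
      · rw [List.prod_append, hpk]; group
    have h1 : l.length ≤ C := by
      rw [hlen, hlenq]; exact hC (π g)
    have h2 : lk.length ≤ κ := by rw [hlenk]; exact hκ _ hk
    calc wordNorm (conjSet S) g ≤ l.length + lk.length := by simpa using hword
      _ ≤ C + κ := Nat.add_le_add h1 h2
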